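/- Suppose six real numbers δ_{ij}, δ_{ik}, δ_{il}, δ_{jk}, δ_{jl}, δ_{kl} (indexed by the unordered pairs from {i,j,k,l}) are such that every triple corresponding to a triangle (i.e., (δ_{ij},δ_{ik},δ_{jk}), (δ_{ij},δ_{il},δ_{jl}), (δ_{ik},δ_{il},δ_{kl}), (δ_{jk},δ_{jl},δ_{kl})) has the double minimum property. Then the triple (δ_{ij}+δ_{kl}, δ_{ik}+δ_{jl}, δ_{il}+δ_{jk}) has the double minimum property. -/

import Mathlib

def DoubleMin (x y z : ℝ) : Prop :=
  (x = min x (min y z) ∧ y = min x (min y z)) ∨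
  (x = min x (min y z) ∧ z = min x (min y z)) ∨
  (y = min x (min y z) ∧ z = min x (min y z))

lemma dm_iff (x y z : ℝ) : DoubleMin x y z ↔
    (x = y ∧ x ≤ z) ∨ (x = z ∧ x ≤ y) ∨ (y = z ∧ y ≤ x) := by
  unfold DoubleMin
  constructor <;>
    rintro (⟨a, b⟩ | ⟨a, b⟩ | ⟨a, b⟩) <;>
    [left; (right; left); (right; right); left; (right; left); (right; right)] <;>
    constructor <;>
    simp only [min_def] at a b ⊢ <;> split_ifs at a b ⊢ <;> linarith

theorem triangle_doubleMin_implies_pairs (dij dik dil djk djl dkl : ℝ)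
    (h1 : DoubleMin dij dik djk)
    (h2 : DoubleMin dij dil djl)
    (h3 : DoubleMin dik dil dkl)
    (h4 : DoubleMin djk djl dkl) :
    DoubleMin (dij + dkl) (dik + djl) (dil + djk) := by
  rw [dm_iff] at h1 h2 h3 h4 ⊢
  rcases h1 with ⟨a1, b1⟩ | ⟨a1, b1⟩ | ⟨a1, b1⟩ <;>
  rcases h2 with ⟨a2, b2⟩ | ⟨a2, b2⟩ | ⟨a2, b2⟩ <;>
  rcases h3 with ⟨a3, b3⟩ | ⟨a3, b3⟩ | ⟨a3, b3⟩ <;>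
  rcases h4 with ⟨a4, b4⟩ | ⟨a4, b4⟩ | ⟨a4, b4⟩ <;>
  first
    | exact Or.inl ⟨by linarith, by linarith⟩
    | exact Or.inr (Or.inl ⟨by linarith, by linarith⟩)
    | exact Or.inr (Or.inr ⟨by linarith, by linarith⟩)
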